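/- Fix a nonincreasing φ : [1,n] → [1,k] and let ⟨S_φ⟩_{ℤ≥0} denote the set of nonnegative integer combinations of elements of S_φ in the lattice H. Then c_{i,j} ∈ ⟨S_φ⟩_{ℤ≥0} whenever j < φ(i), and −c_{i,j} ∈ ⟨S_φ⟩_{ℤ≥0} whenever j ≥ φ(i). -/
import Mathlib


/-!
The homology lattice `H` of the `(n+k+1)`-punctured sphere:
`H = (ℤx₁ ⊕ ⋯ ⊕ ℤx_{n+1} ⊕ ℤv₁ ⊕ ⋯ ⊕ ℤv_k)/(x₁+⋯+x_{n+1} − v₁−⋯−v_k)`,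
with the classes `c_{i,j} = v_k + ⋯ + v_{j+1} − x₁ − ⋯ − x_i`.
All indices are 1-based, as in the paper.
-/

open Finset

/-- The free abelian group on `x₁,…,x_{n+1},v₁,…,v_k`. -/
abbrev FreeH (n k : ℕ) := (Fin (n + 1) ⊕ Fin k) →₀ ℤ

/-- The generator `xᵢ` (for `1 ≤ i ≤ n+1`) of the free abelian group. -/
noncomputable def XX (n k : ℕ) (i : ℕ) : FreeH n k :=
  if h : 1 ≤ i ∧ i ≤ n + 1 then Finsupp.single (Sum.inl (⟨i - 1, by omega⟩ : Fin (n + 1))) 1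
  else 0

/-- The generator `vⱼ` (for `1 ≤ j ≤ k`) of the free abelian group. -/
noncomputable def VV (n k : ℕ) (j : ℕ) : FreeH n k :=
  if h : 1 ≤ j ∧ j ≤ k then Finsupp.single (Sum.inr (⟨j - 1, by omega⟩ : Fin k)) 1
  else 0

/-- The relation `x₁+⋯+x_{n+1} − (v₁+⋯+v_k)`. -/
noncomputable def relH (n k : ℕ) : FreeH n k :=
  (∑ i ∈ Finset.Icc 1 (n + 1), XX n k i) - (∑ j ∈ Finset.Icc 1 k, VV n k j)

/-- The lattice `H`. -/
abbrev HLat (n k : ℕ) := FreeH n k ⧸ Submodule.span ℤ {relH n k}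

/-- The class `xᵢ ∈ H`. -/
noncomputable def xH (n k i : ℕ) : HLat n k := Submodule.Quotient.mk (XX n k i)

/-- The class `vⱼ ∈ H`. -/
noncomputable def vH (n k j : ℕ) : HLat n k := Submodule.Quotient.mk (VV n k j)

/-- The class `c_{i,j} = v_k + ⋯ + v_{j+1} − x₁ − ⋯ − x_i ∈ H`. -/
noncomputable def cH (n k i j : ℕ) : HLat n k :=
  (∑ j' ∈ Finset.Icc (j + 1) k, vH n k j') - (∑ i' ∈ Finset.Icc 1 i, xH n k i')

/-- The set `S_φ ⊆ H` attached to a nonincreasing function `φ : [1,n] → [1,k]`: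
`S_φ = {v_j : j ∉ im φ} ⊔ {x_{i+1} : φ(i) = φ(i+1)} ⊔
       {−c_{i,φ(i)} : φ(i−1) > φ(i) or i = 1} ⊔ {c_{i,φ(i)−1} : φ(i+1) < φ(i) or i = n}`. -/
def Sphi (n k : ℕ) (φ : ℕ → ℕ) : Set (HLat n k) :=
  {h | (∃ j, 1 ≤ j ∧ j ≤ k ∧ (∀ i, 1 ≤ i → i ≤ n → φ i ≠ j) ∧ h = vH n k j) ∨
       (∃ i, 1 ≤ i ∧ i + 1 ≤ n ∧ φ i = φ (i + 1) ∧ h = xH n k (i + 1)) ∨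
       (∃ i, 1 ≤ i ∧ i ≤ n ∧ (i = 1 ∨ φ i < φ (i - 1)) ∧ h = - cH n k i (φ i)) ∨
       (∃ i, 1 ≤ i ∧ i ≤ n ∧ (i = n ∨ φ (i + 1) < φ i) ∧ h = cH n k i (φ i - 1))}

/-!
STATEMENT 4: For a nonincreasing `φ : [1,n] → [1,k]`, letting `⟨S_φ⟩_{ℤ≥0}` be the set of
nonnegative integer combinations of elements of `S_φ` (i.e. the additive submonoid
generated by `S_φ`), one has `c_{i,j} ∈ ⟨S_φ⟩_{ℤ≥0}` whenever `j < φ(i)`, and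
`−c_{i,j} ∈ ⟨S_φ⟩_{ℤ≥0}` whenever `j ≥ φ(i)`.
-/

lemma cH_x_step (n k i j : ℕ) :
    cH n k i j = cH n k (i + 1) j + xH n k (i + 1) := by
  unfold cH
  rw [Finset.sum_Icc_succ_top (Nat.le_add_left 1 i)]
  abel

lemma cH_v_split (n k i j j' : ℕ) (h : j ≤ j') (h' : j' ≤ k) :
    cH n k i j = (∑ m ∈ Finset.Ioc j j', vH n k m) + cH n k i j' := by
  unfold cH
  simp only [Finset.Icc_add_one_left_eq_Ioc]
  rw [← Finset.sum_Ioc_consecutive _ h h']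
  abel

theorem stmt_4 (n k : ℕ) (φ : ℕ → ℕ)
    (hmono : ∀ i, 1 ≤ i → i + 1 ≤ n → φ (i + 1) ≤ φ i)
    (hrange : ∀ i, 1 ≤ i → i ≤ n → 1 ≤ φ i ∧ φ i ≤ k) :
    (∀ i j : ℕ, 1 ≤ i → i ≤ n → j < φ i →
      cH n k i j ∈ AddSubmonoid.closure (Sphi n k φ)) ∧
    (∀ i j : ℕ, 1 ≤ i → i ≤ n → φ i ≤ j → j ≤ k →
      - cH n k i j ∈ AddSubmonoid.closure (Sphi n k φ)) := by
  set M := AddSubmonoid.closure (Sphi n k φ) with hM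
  have hv : ∀ j, 1 ≤ j → j ≤ k → (∀ i, 1 ≤ i → i ≤ n → φ i ≠ j) → vH n k j ∈ M :=
    fun j h1 h2 h3 => AddSubmonoid.subset_closure (Or.inl ⟨j, h1, h2, h3, rfl⟩)
  have hx : ∀ i, 1 ≤ i → i + 1 ≤ n → φ i = φ (i + 1) → xH n k (i + 1) ∈ M :=
    fun i h1 h2 h3 => AddSubmonoid.subset_closure (Or.inr (Or.inl ⟨i, h1, h2, h3, rfl⟩))
  have hc1 : ∀ i, 1 ≤ i → i ≤ n → (i = 1 ∨ φ i < φ (i - 1)) → -cH n k i (φ i) ∈ M :=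
    fun i h1 h2 h3 => AddSubmonoid.subset_closure (Or.inr (Or.inr (Or.inl ⟨i, h1, h2, h3, rfl⟩)))
  have hc2 : ∀ i, 1 ≤ i → i ≤ n → (i = n ∨ φ (i + 1) < φ i) → cH n k i (φ i - 1) ∈ M :=
    fun i h1 h2 h3 => AddSubmonoid.subset_closure (Or.inr (Or.inr (Or.inr ⟨i, h1, h2, h3, rfl⟩)))
  have claim1 : ∀ i, 1 ≤ i → i ≤ n → -cH n k i (φ i) ∈ M := by
    intro i
    induction i with
    | zero => omega
    | succ i ih =>
      intro h1 h2
      rcases Nat.eq_zero_or_pos i with h0 | h0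
      · subst h0; exact hc1 1 le_rfl h2 (Or.inl rfl)
      · have hle := hmono i h0 h2
        rcases lt_or_eq_of_le hle with hlt | heq
        · refine hc1 (i + 1) h1 h2 (Or.inr ?_)
          simpa using hlt
        · have e : -cH n k (i + 1) (φ (i + 1)) = -cH n k i (φ i) + xH n k (i + 1) := by
            rw [heq, cH_x_step n k i (φ i)]; abel
          rw [e]
          exact M.add_mem (ih h0 (by omega)) (hx i h0 h2 heq.symm)
  have claim2 : ∀ d i, 1 ≤ i → i + d = n → cH n k i (φ i - 1) ∈ M := by
    intro d
    induction d with
    | zero => exact fun i h1 h2 => hc2 i h1 (by omega) (Or.inl (by omega))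
    | succ d ih =>
      intro i h1 h2
      have hle := hmono i h1 (by omega)
      rcases lt_or_eq_of_le hle with hlt | heq
      · exact hc2 i h1 (by omega) (Or.inr hlt)
      · have e : cH n k i (φ i - 1) = cH n k (i + 1) (φ (i + 1) - 1) + xH n k (i + 1) := by
          rw [heq, cH_x_step n k i (φ i - 1)]
        rw [e]
        exact M.add_mem (ih (i + 1) (by omega) (by omega)) (hx i h1 (by omega) heq.symm)
  have claim2' : ∀ i, 1 ≤ i → i ≤ n → cH n k i (φ i - 1) ∈ M :=
    fun i h1 h2 => claim2 (n - i) i h1 (by omega)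
  have claim3 : ∀ m, 1 ≤ m → m ≤ k → vH n k m ∈ M := by
    intro m h1 h2
    by_cases h : ∃ i, 1 ≤ i ∧ i ≤ n ∧ φ i = m
    · obtain ⟨i, hi1, hi2, hφ⟩ := h
      subst hφ
      have hs := cH_v_split n k i (φ i - 1) (φ i) (by omega) h2
      have hIoc : Finset.Ioc (φ i - 1) (φ i) = {φ i} := by
        ext a; simp [Finset.mem_Ioc]; omega
      rw [hIoc, Finset.sum_singleton] at hs
      have e : vH n k (φ i) = cH n k i (φ i - 1) + -cH n k i (φ i) := by
        rw [hs]; abel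
      rw [e]
      exact M.add_mem (claim2' i hi1 hi2) (claim1 i hi1 hi2)
    · exact hv m h1 h2 (fun i a b hne => h ⟨i, a, b, hne⟩)
  constructor
  · intro i j hi1 hi2 hj
    have hφ := hrange i hi1 hi2
    rw [cH_v_split n k i j (φ i - 1) (by omega) (by omega)]
    refine M.add_mem (AddSubmonoid.sum_mem M fun m hm => ?_) (claim2' i hi1 hi2)
    rw [Finset.mem_Ioc] at hm
    exact claim3 m (by omega) (by omega)
  · intro i j hi1 hi2 hj hjk
    have hφ := hrange i hi1 hi2
    have e : -cH n k i j = (∑ m ∈ Finset.Ioc (φ i) j, vH n k m) + -cH n k i (φ i) := by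
      rw [cH_v_split n k i (φ i) j hj hjk]; abel
    rw [e]
    refine M.add_mem (AddSubmonoid.sum_mem M fun m hm => ?_) (claim1 i hi1 hi2)
    rw [Finset.mem_Ioc] at hm
    exact claim3 m (by omega) (by omega)
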